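/- For any positive integer n and subset J ⊆ [n−1], the image of the fundamental quasi-symmetric function F_{n,J} under the homomorphism Ψ equals q^{|J|+1}/(1−q)^n, i.e., (1−q)·Σ_r C(r+n−|J|−1, n)·q^r. -/

import Mathlib

open Finset

namespace CQSym

/-- The exponent-vector (weight) of a word with letters among the positive
integers: the monomial `x_{w 0} ⋯ x_{w (n-1)}`. -/
noncomputable def wt {n : ℕ} (w : Fin n → ℕ+) : ℕ+ →₀ ℕ := ∑ i, Finsupp.single (w i) 1

/-- The fundamental quasi-symmetric function `F_{n,J}` for `J ⊆ [n-1]`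
(1-based positions): the sum of `x_{w 0} ⋯ x_{w (n-1)}` over weakly increasing
words with a strict ascent at every position of `J`. -/
noncomputable def Fqsym (n : ℕ) (J : Finset ℕ) : MvPowerSeries ℕ+ ℤ :=
  fun d => (Nat.card {w : Fin n → ℕ+ //
    Monotone w ∧ (∀ i : Fin n, (i : ℕ) + 1 ∈ J → w i < w (finRotate n i)) ∧
    wt w = d} : ℤ)

/-- The monomial quasi-symmetric function `M_{n,J}` for `J ⊆ [n-1]`:
the sum over weakly increasing words with a strict ascent exactly at the
positions of `J`. -/
noncomputable def Mqsym (n : ℕ) (J : Finset ℕ) : MvPowerSeries ℕ+ ℤ :=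
  fun d => (Nat.card {w : Fin n → ℕ+ //
    Monotone w ∧
    (∀ i : Fin n, (i : ℕ) + 1 < n → (((i : ℕ) + 1 ∈ J) ↔ w i < w (finRotate n i))) ∧
    wt w = d} : ℤ)

/-- The fundamental cyclic quasi-symmetric function `F^cyc_{n,J}` for
`J ⊆ [n]` (1-based positions): the sum of `x_{w 0} ⋯ x_{w (n-1)}` over pairs
`(w, k)` such that `w` is cyclically weakly increasing from position `k`
and has a (cyclic) strict ascent at every position of `J` except possibly
at the position just before `k`. -/
noncomputable def cFqsym (n : ℕ) (J : Finset ℕ) : MvPowerSeries ℕ+ ℤ :=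
  fun d => (Nat.card {p : (Fin n → ℕ+) × Fin n //
    Monotone (fun i : Fin n => p.1 (p.2 + i)) ∧
    (∀ i : Fin n, (i : ℕ) + 1 ∈ J → i ≠ (finRotate n).symm p.2 →
      p.1 i < p.1 (finRotate n i)) ∧
    wt p.1 = d} : ℤ)

/-- The monomial cyclic quasi-symmetric function `M^cyc_{n,J}` for
`J ⊆ [n]`: the sum of `x_{w 0} ⋯ x_{w (n-1)}` over pairs `(w, k)` such that
`w` is cyclically weakly increasing from position `k`, the position just
before `k` belongs to `J`, and at every other position the (cyclic) strict
ascents of `w` are exactly the positions of `J`. -/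
noncomputable def cMqsym (n : ℕ) (J : Finset ℕ) : MvPowerSeries ℕ+ ℤ :=
  fun d => (Nat.card {p : (Fin n → ℕ+) × Fin n //
    Monotone (fun i : Fin n => p.1 (p.2 + i)) ∧
    (((finRotate n).symm p.2 : Fin n) : ℕ) + 1 ∈ J ∧
    (∀ i : Fin n, i ≠ (finRotate n).symm p.2 →
      (((i : ℕ) + 1 ∈ J) ↔ p.1 i < p.1 (finRotate n i))) ∧
    wt p.1 = d} : ℤ)

/-- The cyclic shift `J - i` of a subset `J ⊆ [n]`, computed modulo `n`,
with representatives `1, …, n`. -/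
def cshift (n : ℕ) (J : Finset ℕ) (i : ℕ) : Finset ℕ :=
  J.image fun j => (j + n - i - 1) % n + 1

/-- The complete homogeneous symmetric function `h_n`: the sum of all
monomials of degree `n`. -/
noncomputable def hqsym (n : ℕ) : MvPowerSeries ℕ+ ℤ :=
  fun d => if d.sum (fun _ e => e) = n then 1 else 0

open scoped Classical in
/-- The elementary symmetric function `e_n`: the sum of all squarefree
monomials of degree `n`. -/
noncomputable def eqsym (n : ℕ) : MvPowerSeries ℕ+ ℤ :=
  fun d => if d.sum (fun _ e => e) = n ∧ ∀ x, d x ≤ 1 then 1 else 0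

/-- The Schur function of hook shape `(n-k, 1^k)`, defined via semistandard
tableaux: a weakly increasing first row of length `n-k`, a strictly
increasing leg of length `k` below its first cell. -/
noncomputable def hookSchur (n k : ℕ) : MvPowerSeries ℕ+ ℤ :=
  fun d => (Nat.card {p : (Fin (n - k) → ℕ+) × (Fin k → ℕ+) //
    Monotone p.1 ∧ StrictMono p.2 ∧
    (∀ (h1 : 0 < n - k) (h2 : 0 < k), p.1 ⟨0, h1⟩ < p.2 ⟨0, h2⟩) ∧
    wt p.1 + wt p.2 = d} : ℤ)

/-- The descent number of a word with (distinct) integer letters. -/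
def des {N : ℕ} (w : Fin N → ℤ) : ℕ :=
  (Finset.univ.filter fun i : Fin N => (i : ℕ) + 1 < N ∧ w (finRotate N i) < w i).card

/-- The cyclic descent number of a word with (distinct) integer letters. -/
def cdes {N : ℕ} (w : Fin N → ℤ) : ℕ :=
  (Finset.univ.filter fun i : Fin N => w (finRotate N i) < w i).card

/-- `w` is a shuffle of `u` and `v`. -/
def IsShuffle {m n : ℕ} (u : Fin m → ℤ) (v : Fin n → ℤ) (w : Fin (m + n) → ℤ) : Prop :=
  ∃ (f : Fin m → Fin (m + n)) (g : Fin n → Fin (m + n)),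
    StrictMono f ∧ StrictMono g ∧ (∀ i, w (f i) = u i) ∧ (∀ j, w (g j) = v j) ∧
    (∀ x, (∃ i, f i = x) ∨ (∃ j, g j = x))

/-- The cyclic class `[w]` is a cyclic shuffle of `[u]` and `[v]`: some
cyclic rotation of `w` is a shuffle of cyclic rotations of `u` and `v`. -/
def IsCyclicShuffle {m n : ℕ} (u : Fin m → ℤ) (v : Fin n → ℤ) (w : Fin (m + n) → ℤ) : Prop :=
  ∃ (kw : Fin (m + n)) (ku : Fin m) (kv : Fin n),
    IsShuffle (fun i => u (i + ku)) (fun i => v (i + kv)) (fun i => w (i + kw))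

/-- Rotation equivalence of words satisfying a property `P`;  `Quot` of this
relation is the set of cyclic equivalence classes. -/
def RotRel {N : ℕ} (P : (Fin N → ℤ) → Prop) (w₁ w₂ : {w : Fin N → ℤ // P w}) : Prop :=
  ∃ k : Fin N, ∀ i, w₁.val i = w₂.val (i + k)

/-- Binomial coefficient with integer upper and lower arguments, zero for
negative lower argument. -/
noncomputable def zchoose (a b : ℤ) : ℤ := if 0 ≤ b then Ring.choose a b.toNat else 0

/-- The map `Ψ`, sending a monomial `x_{i₁}^{m₁} ⋯ x_{i_k}^{m_k}`
(`i₁ < … < i_k`) to `q^{i_k}`, extended linearly. -/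
noncomputable def psi (f : MvPowerSeries ℕ+ ℤ) : PowerSeries ℤ :=
  PowerSeries.mk fun r =>
    if r = 0 then MvPowerSeries.coeff 0 f
    else ∑ᶠ d ∈ {d : ℕ+ →₀ ℕ |
        ∃ m ∈ d.support, (∀ m' ∈ d.support, m' ≤ m) ∧ (m : ℕ) = r},
      MvPowerSeries.coeff d f

/-- The product `⊙` on `ℤ[[q]]` determined by `q^i ⊙ q^j = q^{max(i,j)}`. -/
noncomputable def odot (a b : PowerSeries ℤ) : PowerSeries ℤ :=
  PowerSeries.mk fun r =>
    (PowerSeries.coeff r a) * (∑ s ∈ Finset.range (r + 1), PowerSeries.coeff s b) +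
    (∑ s ∈ Finset.range r, PowerSeries.coeff s a) * (PowerSeries.coeff r b)

/-- A multivariate power series of bounded (total) degree. -/
def BoundedDeg (f : MvPowerSeries ℕ+ ℤ) : Prop :=
  ∃ D, ∀ d : ℕ+ →₀ ℕ, D < d.sum (fun _ e => e) → MvPowerSeries.coeff d f = 0

/-- Cellini's cyclic descent set of a permutation (0-based positions). -/
def cDesF {n : ℕ} (w : Fin n → Fin n) : Finset (Fin n) :=
  Finset.univ.filter fun i => w (finRotate n i) < w i

/-- The ordinary descent set of a permutation (0-based positions). -/
def DesF {n : ℕ} (w : Fin n → Fin n) : Finset (Fin n) :=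
  Finset.univ.filter fun i => (i : ℕ) + 1 < n ∧ w (finRotate n i) < w i



def aJ (J : Finset ℕ) (i : ℕ) : ℕ := (J ∩ Finset.Icc 1 i).card

lemma aJ_zero (J : Finset ℕ) : aJ J 0 = 0 := by simp [aJ]

lemma aJ_succ (J : Finset ℕ) (i : ℕ) :
    aJ J (i + 1) = aJ J i + (if i + 1 ∈ J then 1 else 0) := by
  unfold aJ
  have h : Finset.Icc 1 (i+1) = insert (i+1) (Finset.Icc 1 i) := by
    ext x; simp [Finset.mem_Icc, Finset.mem_insert]; omega
  by_cases hm : i + 1 ∈ J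
  · rw [h, Finset.inter_insert_of_mem hm, if_pos hm, Finset.card_insert_of_notMem]
    simp [Finset.mem_Icc]
  · rw [h, Finset.inter_insert_of_notMem hm, if_neg hm, Nat.add_zero]

lemma aJ_le (J : Finset ℕ) (i : ℕ) : aJ J i ≤ i := by
  calc (J ∩ Finset.Icc 1 i).card ≤ (Finset.Icc 1 i).card :=
        Finset.card_le_card (Finset.inter_subset_right)
    _ = i := by rw [Nat.card_Icc]; omega

lemma aJ_of_ge {J : Finset ℕ} {m : ℕ} (hJ : J ⊆ Finset.Icc 1 m) {i : ℕ} (h : m ≤ i) :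
    aJ J i = J.card := by
  unfold aJ; congr 1
  rw [Finset.inter_eq_left]
  intro x hx
  have := hJ hx
  simp only [Finset.mem_Icc] at *
  omega

lemma finRotate_mk {m k : ℕ} (h : k < m) (h1 : k < m + 1) (h2 : k + 1 < m + 1) :
    finRotate (m+1) ⟨k, h1⟩ = ⟨k+1, h2⟩ := by
  rw [finRotate_succ_apply]
  ext
  rw [Fin.val_add_one_of_lt]
  simp [Fin.lt_def, Fin.last]; omega

/-- monotonicity from adjacent steps -/
lemma monotone_fin_succ {α : Type*} [Preorder α] {m : ℕ} (w : Fin (m+1) → α)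
    (h : ∀ k, ∀ hk : k < m, w ⟨k, by omega⟩ ≤ w ⟨k+1, by omega⟩) : Monotone w := by
  have H : ∀ q (hq : q < m+1) p (hp : p ≤ q), w ⟨p, by omega⟩ ≤ w ⟨q, hq⟩ := by
    intro q
    induction q with
    | zero =>
      intro hq p hp
      have : p = 0 := by omega
      subst this; exact le_rfl
    | succ q ih =>
      intro hq p hp
      rcases Nat.lt_or_ge p (q+1) with h' | h'
      · exact le_trans (ih (by omega) p (by omega)) (h q (by omega))
      · have : p = q + 1 := by omega
        subst this; exact le_rfl
  intro i j hij
  have := H j.val j.isLt i.val hij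
  simpa using this

section Words

variable {m : ℕ} {J : Finset ℕ}

/-- step inequality for a word in `W` -/
lemma word_step (hJ : J ⊆ Finset.Icc 1 m) {w : Fin (m+1) → ℕ+} (hmono : Monotone w)
    (hasc : ∀ i : Fin (m+1), (i:ℕ)+1 ∈ J → w i < w (finRotate (m+1) i))
    {k : ℕ} (hk : k < m) :
    (w ⟨k, by omega⟩ : ℕ) + (if k+1 ∈ J then 1 else 0) ≤ (w ⟨k+1, by omega⟩ : ℕ) := by
  by_cases hkJ : k + 1 ∈ J
  · have := hasc ⟨k, by omega⟩ hkJ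
    rw [finRotate_mk hk (by omega) (by omega)] at this
    rw [if_pos hkJ]
    exact_mod_cast this
  · rw [if_neg hkJ, add_zero]
    have hle : (⟨k, by omega⟩ : Fin (m+1)) ≤ (⟨k+1, by omega⟩ : Fin (m+1)) := by
      simp [Fin.le_def]
    exact_mod_cast hmono hle

lemma word_lb (hJ : J ⊆ Finset.Icc 1 m) {w : Fin (m+1) → ℕ+} (hmono : Monotone w)
    (hasc : ∀ i : Fin (m+1), (i:ℕ)+1 ∈ J → w i < w (finRotate (m+1) i)) :
    ∀ k, ∀ hk : k < m + 1, aJ J k + 1 ≤ (w ⟨k, hk⟩ : ℕ) := by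
  intro k
  induction k with
  | zero =>
    intro hk
    rw [aJ_zero]
    exact (w ⟨0, hk⟩).2
  | succ k ih =>
    intro hk
    have hk' : k < m := by omega
    have h1 := word_step hJ hmono hasc hk'
    have h2 := ih (by omega)
    rw [aJ_succ]
    by_cases hkJ : k + 1 ∈ J <;> simp only [if_pos, if_neg, hkJ] at * <;> omega

/-- the strictified word -/
noncomputable def wordG (J : Finset ℕ) {m : ℕ} (w : Fin (m+1) → ℕ+) (k : ℕ) : ℕ :=
  ((w ⟨min k m, by omega⟩ : ℕ) - (aJ J k + 1)) + k

lemma wordG_strictMono (hJ : J ⊆ Finset.Icc 1 m) {w : Fin (m+1) → ℕ+} (hmono : Monotone w)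
    (hasc : ∀ i : Fin (m+1), (i:ℕ)+1 ∈ J → w i < w (finRotate (m+1) i)) :
    StrictMono (wordG J w) := by
  apply strictMono_nat_of_lt_succ
  intro k
  unfold wordG
  rcases Nat.lt_or_ge k m with hk | hk
  · have e1 : w ⟨min k m, by omega⟩ = w ⟨k, by omega⟩ := by congr 1; ext; simp; omega
    have e2 : w ⟨min (k+1) m, by omega⟩ = w ⟨k+1, by omega⟩ := by congr 1; ext; simp; omega
    rw [e1, e2]
    have h1 := word_step hJ hmono hasc hk
    have h2 := word_lb hJ hmono hasc k (by omega)
    have h3 := aJ_succ J k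
    by_cases hkJ : k + 1 ∈ J <;> simp only [if_pos, if_neg, hkJ] at * <;> omega
  · have e1 : w ⟨min k m, by omega⟩ = w ⟨min (k+1) m, by omega⟩ := by
      congr 1; ext; simp; omega
    have e3 : aJ J k = J.card := aJ_of_ge hJ hk
    have e4 : aJ J (k+1) = J.card := aJ_of_ge hJ (by omega)
    rw [e1, e3, e4]
    omega

/-- the ℕ-extension of a strict word -/
noncomputable def wordF {m : ℕ} {K : ℕ} (f : Fin m → Fin K) (k : ℕ) : ℕ :=
  if h : k < m then (f ⟨k, h⟩ : ℕ) else K + (k - m)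

lemma wordF_strictMono {m K : ℕ} {f : Fin m → Fin K} (hf : StrictMono f) :
    StrictMono (wordF f) := by
  apply strictMono_nat_of_lt_succ
  intro k
  unfold wordF
  rcases Nat.lt_or_ge (k+1) m with hk | hk
  · rw [dif_pos (by omega : k < m), dif_pos hk]
    exact hf (by simp [Fin.lt_def])
  · rcases Nat.lt_or_ge k m with hk' | hk'
    · rw [dif_pos hk', dif_neg (by omega)]
      have := (f ⟨k, hk'⟩).isLt
      omega
    · rw [dif_neg (by omega), dif_neg (by omega)]
      omega

lemma wordF_le_apply {m K : ℕ} {f : Fin m → Fin K} (hf : StrictMono f) (k : ℕ) :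
    k ≤ wordF f k := (wordF_strictMono hf).le_apply

lemma wordF_m {m K : ℕ} (f : Fin m → Fin K) : wordF f m = K := by
  unfold wordF
  rw [dif_neg (lt_irrefl m)]
  simp

lemma wordF_lt {m K : ℕ} (f : Fin m → Fin K) {k : ℕ} (h : k < m) :
    wordF f k = (f ⟨k, h⟩ : ℕ) := dif_pos h

lemma m_le_K {m K : ℕ} {f : Fin m → Fin K} (hf : StrictMono f) : m ≤ K := by
  have := wordF_le_apply hf m
  rwa [wordF_m] at this

/-- the word associated to a strictly monotone function -/
noncomputable def wordW (J : Finset ℕ) {m K : ℕ} (f : Fin m → Fin K) (i : Fin (m+1)) : ℕ+ :=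
  ⟨(wordF f i - i) + aJ J i + 1, Nat.succ_pos _⟩

lemma wordW_step {K : ℕ} {f : Fin m → Fin K} (hf : StrictMono f) {k : ℕ} (hk : k < m) :
    (wordW J f ⟨k, by omega⟩ : ℕ) + (if k + 1 ∈ J then 1 else 0)
      ≤ (wordW J f ⟨k+1, by omega⟩ : ℕ) := by
  show (wordF f k - k) + aJ J k + 1 + _ ≤ (wordF f (k+1) - (k+1)) + aJ J (k+1) + 1
  have h1 := wordF_le_apply hf k
  have h2 : wordF f k < wordF f (k+1) := (wordF_strictMono hf) (by omega)
  have h3 := aJ_succ J k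
  by_cases hkJ : k + 1 ∈ J <;> simp only [if_pos, if_neg, hkJ] at * <;> omega

lemma wordW_mono {K : ℕ} {f : Fin m → Fin K} (hf : StrictMono f) :
    Monotone (wordW J f) := by
  apply monotone_fin_succ
  intro k hk
  have h := wordW_step (J := J) hf hk
  rw [← PNat.coe_le_coe]
  by_cases hkJ : k + 1 ∈ J <;> simp only [if_pos, if_neg, hkJ] at h <;> omega

lemma wordW_asc {K : ℕ} (hJ : J ⊆ Finset.Icc 1 m) {f : Fin m → Fin K} (hf : StrictMono f) :
    ∀ i : Fin (m+1), (i:ℕ)+1 ∈ J → wordW J f i < wordW J f (finRotate (m+1) i) := by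
  intro i hi
  have him : (i : ℕ) < m := by
    have := hJ hi; simp only [Finset.mem_Icc] at this; omega
  have heq : i = ⟨(i:ℕ), by omega⟩ := by ext; rfl
  rw [heq, finRotate_mk him (by omega) (by omega)]
  have h := wordW_step (J := J) hf him
  rw [if_pos hi] at h
  rw [← PNat.coe_lt_coe]
  omega

lemma wordW_last {K : ℕ} (hJ : J ⊆ Finset.Icc 1 m) (f : Fin m → Fin K) :
    (wordW J f (Fin.last m) : ℕ) = (K - m) + J.card + 1 := by
  show (wordF f m - m) + aJ J m + 1 = _
  rw [wordF_m, aJ_of_ge hJ le_rfl]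

end Words

lemma card_strictMono (a b : ℕ) :
    Nat.card {f : Fin a → Fin b // StrictMono f} = b.choose a := by
  classical
  have e : {f : Fin a → Fin b // StrictMono f} ≃ {s : Finset (Fin b) // s.card = a} :=
    { toFun := fun f => ⟨Finset.univ.image f.1, by
        rw [Finset.card_image_of_injective _ f.2.injective, Finset.card_univ,
          Fintype.card_fin]⟩
      invFun := fun s => ⟨s.1.orderEmbOfFin s.2, (s.1.orderEmbOfFin s.2).strictMono⟩
      left_inv := fun f => by
        apply Subtype.ext
        symm
        exact Finset.orderEmbOfFin_unique _
          (fun x => Finset.mem_image_of_mem _ (Finset.mem_univ x)) f.2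
      right_inv := fun s => by
        apply Subtype.ext
        apply Finset.coe_injective
        rw [Finset.coe_image, Finset.coe_univ, Set.image_univ,
          Finset.range_orderEmbOfFin] }
  rw [Nat.card_congr e, Nat.card_eq_fintype_card, Fintype.card_finset_len, Fintype.card_fin]

lemma card_W (m : ℕ) (J : Finset ℕ) (hJ : J ⊆ Finset.Icc 1 m) (r : ℕ+) :
    Nat.card {w : Fin (m+1) → ℕ+ //
      Monotone w ∧ (∀ i : Fin (m+1), (i:ℕ)+1 ∈ J → w i < w (finRotate (m+1) i)) ∧
      w (Fin.last m) = r} = (((r:ℕ) - 1 + (m - J.card)).choose m) := by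
  classical
  have hc : J.card ≤ m := by
    have := Finset.card_le_card hJ
    rwa [Nat.card_Icc, Nat.add_sub_cancel] at this
  set c := J.card with hcdef
  set K := ((r:ℕ) - 1 + (m - c)) with hKdef
  have hr1 : 1 ≤ (r : ℕ) := r.2
  have e : {w : Fin (m+1) → ℕ+ //
      Monotone w ∧ (∀ i : Fin (m+1), (i:ℕ)+1 ∈ J → w i < w (finRotate (m+1) i)) ∧
      w (Fin.last m) = r} ≃ {f : Fin m → Fin K // StrictMono f} := by
    refine
      { toFun := fun w => ⟨fun i => ⟨wordG J w.1 i, ?_⟩, ?_⟩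
        invFun := fun f => ⟨wordW J f.1, wordW_mono f.2, wordW_asc hJ f.2, ?_⟩
        left_inv := ?_
        right_inv := ?_ }
    · -- bound : wordG J w.1 i < K
      obtain ⟨w, hmono, hasc, hlast⟩ := w
      show wordG J w (i:ℕ) < K
      have hG := wordG_strictMono hJ hmono hasc
      have hlb : aJ J m + 1 ≤ (w (Fin.last m) : ℕ) := word_lb hJ hmono hasc m (by omega)
      have hrc : c + 1 ≤ (r : ℕ) := by
        rw [aJ_of_ge hJ le_rfl, hlast] at hlb; omega
      have hGm : wordG J w m = ((r:ℕ) - (c+1)) + m := by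
        unfold wordG
        have e1 : w ⟨min m m, by omega⟩ = w (Fin.last m) := by congr 1; ext; simp
        rw [e1, hlast, aJ_of_ge hJ le_rfl]
      have := hG (show (i : ℕ) < m from i.isLt)
      rw [hGm] at this
      omega
    · -- strict monotonicity of the image
      obtain ⟨w, hmono, hasc, hlast⟩ := w
      intro i j hij
      simp only [Fin.mk_lt_mk]
      exact wordG_strictMono hJ hmono hasc (show (i:ℕ) < (j:ℕ) from hij)
    · -- last value of wordW is r
      obtain ⟨f, hf⟩ := f
      have hmK : m ≤ K := m_le_K hf
      have h := wordW_last (J := J) hJ f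
      have hrc : c + 1 ≤ (r : ℕ) := by omega
      apply Subtype.ext
      show ((wordW J f (Fin.last m) : ℕ)) = (r : ℕ)
      omega
    · -- left inverse
      rintro ⟨w, hmono, hasc, hlast⟩
      apply Subtype.ext
      funext i
      apply Subtype.ext
      have hlb : ∀ k, ∀ hk : k < m + 1, aJ J k + 1 ≤ (w ⟨k, hk⟩ : ℕ) :=
        word_lb hJ hmono hasc
      have hrc : c + 1 ≤ (r : ℕ) := by
        have := hlb m (by omega)
        rw [aJ_of_ge hJ le_rfl] at this
        have hl : w ⟨m, by omega⟩ = r := hlast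
        rw [hl] at this; omega
      show ((wordW J (fun j => (⟨wordG J w j, _⟩ : Fin K)) i : ℕ+) : ℕ) = (w i : ℕ)
      show (wordF (fun j => (⟨wordG J w j, _⟩ : Fin K)) i - i) + aJ J i + 1 = (w i : ℕ)
      rcases Nat.lt_or_ge (i : ℕ) m with him | him
      · rw [wordF_lt _ him]
        show (wordG J w i - i) + aJ J i + 1 = (w i : ℕ)
        unfold wordG
        have e1 : w ⟨min (i:ℕ) m, by omega⟩ = w i := by congr 1; ext; simp; omega
        rw [e1]
        have := hlb i i.isLt
        have e2 : w ⟨(i:ℕ), i.isLt⟩ = w i := by congr 1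
        rw [e2] at this
        omega
      · have him' : (i : ℕ) = m := by omega
        have e1 : i = Fin.last m := by ext; simpa using him'
        subst e1
        have hw : ((w (Fin.last m)) : ℕ) = (r : ℕ) := by rw [hlast]
        simp only [Fin.val_last]
        rw [wordF_m, aJ_of_ge hJ le_rfl]
        omega
    · -- right inverse
      rintro ⟨f, hf⟩
      apply Subtype.ext
      funext i
      apply Fin.ext
      show wordG J (wordW J f) i = (f i : ℕ)
      unfold wordG
      have e1 : wordW J f ⟨min (i:ℕ) m, by omega⟩ = wordW J f ⟨(i:ℕ), by omega⟩ := by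
        congr 1
        ext
        exact Nat.min_eq_left (le_of_lt i.isLt)
      rw [e1]
      show ((wordF f (i:ℕ) - (i:ℕ)) + aJ J (i:ℕ) + 1) - (aJ J (i:ℕ) + 1) + (i:ℕ) = (f i : ℕ)
      have h1 := wordF_le_apply hf (i : ℕ)
      have h2 : wordF f (i:ℕ) = (f i : ℕ) := by
        rw [wordF_lt _ i.isLt]
      omega
  rw [Nat.card_congr e, card_strictMono]



lemma wt_apply {n : ℕ} (w : Fin n → ℕ+) (x : ℕ+) :
    wt w x = (Finset.univ.filter fun i => w i = x).card := by
  classical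
  rw [wt, Finsupp.finset_sum_apply, Finset.card_filter]
  refine Finset.sum_congr rfl fun i _ => ?_
  rw [Finsupp.single_apply]

lemma mem_support_wt {n : ℕ} (w : Fin n → ℕ+) (x : ℕ+) :
    x ∈ (wt w).support ↔ ∃ i, w i = x := by
  classical
  rw [Finsupp.mem_support_iff, wt_apply, Ne, Finset.card_eq_zero, ← Ne,
    ← Finset.nonempty_iff_ne_empty, Finset.filter_nonempty_iff]
  simp

lemma wt_ne_zero {n : ℕ} (hn : 0 < n) (w : Fin n → ℕ+) : wt w ≠ 0 := by
  intro h
  have hm : w ⟨0, hn⟩ ∈ (wt w).support := (mem_support_wt w _).2 ⟨⟨0, hn⟩, rfl⟩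
  rw [h] at hm
  simp at hm

/-- For a monotone word, the maximal letter is the last one. -/
lemma max_support_wt {m : ℕ} {w : Fin (m+1) → ℕ+} (hmono : Monotone w) {r : ℕ} (hr : 0 < r) :
    (∃ x ∈ (wt w).support, (∀ y ∈ (wt w).support, y ≤ x) ∧ (x : ℕ) = r)
      ↔ ((w (Fin.last m)) : ℕ) = r := by
  constructor
  · rintro ⟨x, hx, hmax, rfl⟩
    obtain ⟨i, hi⟩ := (mem_support_wt w x).1 hx
    have h1 : w (Fin.last m) ≤ x := by
      refine hmax _ ((mem_support_wt w _).2 ⟨Fin.last m, rfl⟩)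
    have h2 : x ≤ w (Fin.last m) := hi ▸ hmono (Fin.le_last i)
    rw [le_antisymm h1 h2]
  · intro h
    refine ⟨w (Fin.last m), (mem_support_wt w _).2 ⟨Fin.last m, rfl⟩, fun y hy => ?_, h⟩
    obtain ⟨i, rfl⟩ := (mem_support_wt w y).1 hy
    exact hmono (Fin.le_last i)

section Count

variable {m : ℕ} {J : Finset ℕ}

lemma finite_wt_fiber (n : ℕ) (d : ℕ+ →₀ ℕ) :
    Finite {w : Fin n → ℕ+ //
      Monotone w ∧ (∀ i : Fin n, (i:ℕ)+1 ∈ J → w i < w (finRotate n i)) ∧ wt w = d} := by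
  classical
  refine Finite.of_injective
    (fun w => (fun i => (⟨w.1 i, ?_⟩ : {x // x ∈ d.support}) : Fin n → {x // x ∈ d.support}))
    ?_
  · have := (mem_support_wt w.1 (w.1 i)).2 ⟨i, rfl⟩
    rwa [w.2.2.2] at this
  · intro w1 w2 h
    apply Subtype.ext
    funext i
    exact congrArg Subtype.val (congrFun h i)

lemma finite_W (r : ℕ+) :
    Finite {w : Fin (m+1) → ℕ+ //
      Monotone w ∧ (∀ i : Fin (m+1), (i:ℕ)+1 ∈ J → w i < w (finRotate (m+1) i)) ∧
      w (Fin.last m) = r} := by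
  classical
  refine Finite.of_injective
    (fun w => (fun i => (⟨(w.1 i : ℕ) - 1, ?_⟩ : Fin r) : Fin (m+1) → Fin r)) ?_
  · have h1 : w.1 i ≤ w.1 (Fin.last m) := w.2.1 (Fin.le_last i)
    have h2 : w.1 (Fin.last m) = r := w.2.2.2
    have h3 : ((w.1 i : ℕ+) : ℕ) ≤ ((w.1 (Fin.last m) : ℕ+) : ℕ) := h1
    rw [h2] at h3
    have h4 : 1 ≤ (w.1 i : ℕ) := (w.1 i).2
    omega
  · intro w1 w2 h
    apply Subtype.ext
    funext i
    have hval := congrFun h i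
    simp only [Fin.mk.injEq] at hval
    have h41 : 1 ≤ (w1.1 i : ℕ) := (w1.1 i).2
    have h42 : 1 ≤ (w2.1 i : ℕ) := (w2.1 i).2
    exact PNat.coe_injective (by omega : ((w1.1 i : ℕ)) = ((w2.1 i : ℕ)))

lemma finsum_count (hJ : J ⊆ Finset.Icc 1 m) (r : ℕ) (hr : 0 < r) :
    ∑ᶠ d ∈ {d : ℕ+ →₀ ℕ | ∃ x ∈ d.support, (∀ y ∈ d.support, y ≤ x) ∧ (x : ℕ) = r},
      ((Nat.card {w : Fin (m+1) → ℕ+ //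
        Monotone w ∧ (∀ i : Fin (m+1), (i:ℕ)+1 ∈ J → w i < w (finRotate (m+1) i)) ∧
        wt w = d}) : ℤ)
    = ((r - 1 + (m - J.card)).choose m : ℤ) := by
  classical
  set rp : ℕ+ := ⟨r, hr⟩ with hrp
  set S : Set (ℕ+ →₀ ℕ) :=
    {d : ℕ+ →₀ ℕ | ∃ x ∈ d.support, (∀ y ∈ d.support, y ≤ x) ∧ (x : ℕ) = r} with hS
  set A : (ℕ+ →₀ ℕ) → Type := fun d => {w : Fin (m+1) → ℕ+ //
        Monotone w ∧ (∀ i : Fin (m+1), (i:ℕ)+1 ∈ J → w i < w (finRotate (m+1) i)) ∧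
        wt w = d} with hA
  set W : Type := {w : Fin (m+1) → ℕ+ //
      Monotone w ∧ (∀ i : Fin (m+1), (i:ℕ)+1 ∈ J → w i < w (finRotate (m+1) i)) ∧
      w (Fin.last m) = rp} with hW
  haveI hWfin : Finite W := finite_W rp
  haveI hAfin : ∀ d, Finite (A d) := fun d => finite_wt_fiber (m+1) d
  set f : (ℕ+ →₀ ℕ) → ℤ := fun d => ((Nat.card (A d)) : ℤ) with hf
  have hWsetfin : {w : Fin (m+1) → ℕ+ //
      Monotone w ∧ (∀ i : Fin (m+1), (i:ℕ)+1 ∈ J → w i < w (finRotate (m+1) i)) ∧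
      w (Fin.last m) = rp} → True := fun _ => trivial
  -- the set of words as a Set
  set Wset : Set (Fin (m+1) → ℕ+) := {w | Monotone w ∧
      (∀ i : Fin (m+1), (i:ℕ)+1 ∈ J → w i < w (finRotate (m+1) i)) ∧
      w (Fin.last m) = rp} with hWset
  haveI : Finite Wset := hWfin
  have hWsfin : Wset.Finite := Set.toFinite Wset
  have hsub : S ∩ Function.support f ⊆ wt '' Wset := by
    rintro d ⟨hdS, hdf⟩
    have : Nat.card (A d) ≠ 0 := by
      intro h0
      apply hdf
      simp only [hf, h0, Int.natCast_zero]
    obtain ⟨⟨w, h1, h2, h3⟩⟩ := (Nat.card_ne_zero.1 this).1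
    refine ⟨w, ⟨h1, h2, ?_⟩, h3⟩
    have := (max_support_wt h1 hr).1 (by rw [h3]; exact hdS)
    exact PNat.coe_injective this
  have hfin : (S ∩ Function.support f).Finite := (hWsfin.image wt).subset hsub
  rw [finsum_mem_eq_sum f hfin]
  -- now the sigma-type equivalence
  set T : Finset (ℕ+ →₀ ℕ) := hfin.toFinset with hT
  have hTmem : ∀ d ∈ T, d ∈ S := by
    intro d hd
    rw [hT, Set.Finite.mem_toFinset] at hd
    exact hd.1
  have hlastmem : ∀ (w : Fin (m+1) → ℕ+), Monotone w →
      (∀ i : Fin (m+1), (i:ℕ)+1 ∈ J → w i < w (finRotate (m+1) i)) →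
      w (Fin.last m) = rp → wt w ∈ T := by
    intro w h1 h2 h3
    rw [hT, Set.Finite.mem_toFinset]
    constructor
    · refine (max_support_wt h1 hr).2 ?_
      rw [h3]
      rfl
    · rw [Function.mem_support, hf]
      have hne : Nat.card (A (wt w)) ≠ 0 :=
        Nat.card_ne_zero.2 ⟨⟨⟨w, h1, h2, rfl⟩⟩, hAfin _⟩
      show ((Nat.card (A (wt w)) : ℤ)) ≠ 0
      exact_mod_cast hne
  have E : (Σ d : T, A d.1) ≃ W := by
    have hto : ∀ p : (Σ d : T, A d.1), p.2.1 (Fin.last m) = rp := by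
      intro p
      have hdS : (p.1 : ℕ+ →₀ ℕ) ∈ S := hTmem p.1 p.1.2
      have h3 := p.2.2.2.2
      apply PNat.coe_injective
      refine (max_support_wt p.2.2.1 hr).1 ?_
      rw [h3]
      exact hdS
    refine Equiv.ofBijective
      (fun p => (⟨p.2.1, p.2.2.1, p.2.2.2.1, hto p⟩ : W)) ⟨?_, ?_⟩
    · rintro ⟨⟨d, hd⟩, a⟩ ⟨⟨d', hd'⟩, b⟩ h
      have hw : a.1 = b.1 := congrArg Subtype.val h
      have ha : wt a.1 = d := a.2.2.2
      have hb : wt b.1 = d' := b.2.2.2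
      have hdd : d = d' := by rw [← ha, ← hb, hw]
      subst hdd
      cases (Subtype.ext hw : a = b)
      rfl
    · rintro ⟨w, h1, h2, h3⟩
      exact ⟨⟨⟨wt w, hlastmem w h1 h2 h3⟩, ⟨w, h1, h2, rfl⟩⟩, rfl⟩
  have hcardW : Nat.card W = ((r - 1 + (m - J.card)).choose m) := by
    have := card_W m J hJ rp
    rw [hW]
    exact this
  letI I1 : ∀ d : T, Fintype (A d.1) := fun d => Fintype.ofFinite _
  have hNs : Nat.card (Σ d : T, A d.1) = ∑ d : T, Nat.card (A d.1) := by
    simp [Nat.card_eq_fintype_card]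
  rw [← Finset.sum_coe_sort T f]
  have h1 : ∑ d : T, f d.1 = ((∑ d : T, Nat.card (A d.1) : ℕ) : ℤ) := by
    push_cast
    rfl
  rw [h1, ← hNs, Nat.card_congr E, hcardW]

end Count



lemma psi_coeff (m : ℕ) (J : Finset ℕ) (hJ : J ⊆ Finset.Icc 1 m) (r : ℕ) :
    PowerSeries.coeff r (psi (Fqsym (m+1) J)) =
      if r = 0 then 0 else ((r - 1 + (m - J.card)).choose m : ℤ) := by
  rw [psi, PowerSeries.coeff_mk]
  split_ifs with h
  · subst h
    show MvPowerSeries.coeff 0 (Fqsym (m+1) J) = 0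
    rw [MvPowerSeries.coeff_apply]
    show ((Nat.card {w : Fin (m+1) → ℕ+ //
      Monotone w ∧ (∀ i : Fin (m+1), (i : ℕ) + 1 ∈ J → w i < w (finRotate (m+1) i)) ∧
      wt w = 0} : ℤ)) = 0
    haveI : IsEmpty {w : Fin (m+1) → ℕ+ //
        Monotone w ∧ (∀ i : Fin (m+1), (i : ℕ) + 1 ∈ J → w i < w (finRotate (m+1) i)) ∧
        wt w = 0} := ⟨fun w => wt_ne_zero (Nat.succ_pos m) w.1 w.2.2.2⟩
    rw [Nat.card_of_isEmpty]
    rfl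
  · exact finsum_count hJ r (Nat.pos_of_ne_zero h)

lemma psi_eq (m : ℕ) (J : Finset ℕ) (hJ : J ⊆ Finset.Icc 1 m) :
    psi (Fqsym (m+1) J)
      = PowerSeries.X ^ (J.card + 1) * (PowerSeries.invOneSubPow ℤ (m+1)).val := by
  have hc : J.card ≤ m := by
    have := Finset.card_le_card hJ
    rwa [Nat.card_Icc, Nat.add_sub_cancel] at this
  ext r
  rw [psi_coeff m J hJ r, PowerSeries.coeff_X_pow_mul',
    PowerSeries.invOneSubPow_val_eq_mk_sub_one_add_choose_of_pos ℤ (m+1) (Nat.succ_pos m),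
    PowerSeries.coeff_mk]
  by_cases h0 : r = 0
  · subst h0
    rw [if_pos rfl, if_neg (by omega)]
  rw [if_neg h0]
  by_cases h1 : J.card + 1 ≤ r
  · rw [if_pos h1]
    simp only [Nat.add_sub_cancel]
    congr 2
    omega
  · rw [if_neg h1]
    have : r - 1 + (m - J.card) < m := by omega
    rw [Nat.choose_eq_zero_of_lt this]
    rfl

lemma one_sub_X_pow_ne_zero (k : ℕ) : ((1 - PowerSeries.X : PowerSeries ℤ)) ^ k ≠ 0 := by
  apply pow_ne_zero
  intro h
  have := congrArg (PowerSeries.coeff 0) h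
  simp at this


/-- `Ψ(F_{n,J}) = q^{|J|+1}/(1−q)^n = (1−q)·Σ_r C(r+n−|J|−1, n) q^r`. -/
theorem psi_Fqsym (n : ℕ) (hn : 0 < n) (J : Finset ℕ)
    (hJ : J ⊆ Finset.Icc 1 (n - 1)) :
    (1 - PowerSeries.X) ^ n * psi (Fqsym n J) = PowerSeries.X ^ (J.card + 1)
    ∧ psi (Fqsym n J)
        = (1 - PowerSeries.X) *
            PowerSeries.mk (fun r => (((r + n - J.card - 1).choose n : ℕ) : ℤ)) := by
  obtain ⟨m, rfl⟩ : ∃ m, n = m + 1 := ⟨n - 1, by omega⟩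
  rw [Nat.add_sub_cancel] at hJ
  have hc : J.card ≤ m := by
    have := Finset.card_le_card hJ
    rwa [Nat.card_Icc, Nat.add_sub_cancel] at this
  constructor
  · have hiv : ((1 - PowerSeries.X) ^ (m+1) : PowerSeries ℤ)
        = (PowerSeries.invOneSubPow ℤ (m+1)).inv :=
      (PowerSeries.invOneSubPow_inv_eq_one_sub_pow ℤ (m+1)).symm
    rw [psi_eq m J hJ, mul_left_comm, hiv,
      (PowerSeries.invOneSubPow ℤ (m+1)).inv_val, mul_one]
  · have hmk : PowerSeries.mk (fun r => (((r + (m+1) - J.card - 1).choose (m+1) : ℕ) : ℤ))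
        = PowerSeries.X ^ (J.card + 1) * (PowerSeries.invOneSubPow ℤ (m+2)).val := by
      ext r
      rw [PowerSeries.coeff_X_pow_mul', PowerSeries.coeff_mk,
        PowerSeries.invOneSubPow_val_succ_eq_mk_add_choose, PowerSeries.coeff_mk]
      by_cases h1 : J.card + 1 ≤ r
      · rw [if_pos h1]
        congr 2
        omega
      · rw [if_neg h1]
        have : r + (m+1) - J.card - 1 < m + 1 := by omega
        rw [Nat.choose_eq_zero_of_lt this]
        rfl
    rw [hmk, psi_eq m J hJ]
    have key : (PowerSeries.invOneSubPow ℤ (m+1)).val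
        = (1 - PowerSeries.X) * (PowerSeries.invOneSubPow ℤ (m+2)).val := by
      apply mul_right_cancel₀ (one_sub_X_pow_ne_zero (m+1))
      have hiv1 : ((1 - PowerSeries.X) ^ (m+1) : PowerSeries ℤ)
          = (PowerSeries.invOneSubPow ℤ (m+1)).inv :=
        (PowerSeries.invOneSubPow_inv_eq_one_sub_pow ℤ (m+1)).symm
      have hiv2 : ((1 - PowerSeries.X) * (PowerSeries.invOneSubPow ℤ (m+1)).inv : PowerSeries ℤ)
          = (PowerSeries.invOneSubPow ℤ (m+2)).inv := by
        rw [PowerSeries.invOneSubPow_inv_eq_one_sub_pow ℤ (m+1),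
          PowerSeries.invOneSubPow_inv_eq_one_sub_pow ℤ (m+2)]
        ring
      rw [hiv1, (PowerSeries.invOneSubPow ℤ (m+1)).val_inv, mul_right_comm, hiv2,
        (PowerSeries.invOneSubPow ℤ (m+2)).inv_val]
    rw [key]
    ring


end CQSym
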